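/- Let x, y, z be three distinct vertices and let L_{(u,v)} denote the Laplacian of a single edge of weight 1 between u and v. For every 0 < ε ≤ 1 and every 0 < a ≤ 1, one has ε·a·L_{(x,z)} + ½·L_{(x,y)} ≈_{4√ε} ε·a·L_{(y,z)} + ½·L_{(x,y)}. -/

import Mathlib

open Matrix BigOperators Finset
open scoped Classical

noncomputable section

/-- Loewner order: `PSDLE A B` means `A ⪯ B`, i.e. `B - A` is positive semidefinite. -/
def PSDLE {n : Type*} [Fintype n] (A B : Matrix n n ℝ) : Prop :=
  (B - A).PosSemidef

/-- `ApproxEps A ε B` means `A ≈_ε B`, i.e. `e^ε • B ⪰ A ⪰ e^{-ε} • B`. -/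
def ApproxEps {n : Type*} [Fintype n] (A : Matrix n n ℝ) (ε : ℝ) (B : Matrix n n ℝ) : Prop :=
  PSDLE A (Real.exp ε • B) ∧ PSDLE (Real.exp (-ε) • B) A

/-- `M` is α-strongly diagonally dominant:
`M_{ii} ≥ (1+α)·Σ_{j≠i} |M_{ij}|` for every `i`. -/
def IsStronglyDD {n : Type*} [Fintype n] [DecidableEq n] (α : ℝ) (M : Matrix n n ℝ) : Prop :=
  ∀ i, (1 + α) * ∑ j ∈ Finset.univ.erase i, |M i j| ≤ M i i

/-- A Laplacian matrix: symmetric, nonpositive off-diagonal entries, zero row sums. -/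
def IsLaplacian {n : Type*} [Fintype n] (L : Matrix n n ℝ) : Prop :=
  L.IsSymm ∧ (∀ i j, i ≠ j → L i j ≤ 0) ∧ ∀ i, ∑ j, L i j = 0

/-- An SDDM matrix: symmetric positive definite, nonpositive off-diagonal entries,
and each diagonal entry at least the sum of absolute values of the off-diagonal
entries in its row. -/
def IsSDDM {n : Type*} [Fintype n] [DecidableEq n] (M : Matrix n n ℝ) : Prop :=
  M.IsSymm ∧ M.PosDef ∧ (∀ i j, i ≠ j → M i j ≤ 0) ∧
    ∀ i, ∑ j ∈ Finset.univ.erase i, |M i j| ≤ M i i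

/-- The vector `e_u - e_v`. -/
def eVec {ι : Type*} [DecidableEq ι] (u v : ι) : ι → ℝ :=
  fun a => (if a = u then 1 else 0) - (if a = v then 1 else 0)

/-- The Laplacian of a single unit-weight edge `{u,v}`:
`(e_u - e_v)(e_u - e_v)ᵀ`. -/
def edgeL {ι : Type*} [DecidableEq ι] (u v : ι) : Matrix ι ι ℝ :=
  Matrix.vecMulVec (eVec u v) (eVec u v)


lemma eVec_dot {ι : Type*} [Fintype ι] [DecidableEq ι] (u v : ι) (x : ι → ℝ) :
    eVec u v ⬝ᵥ x = x u - x v := by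
  simp [eVec, dotProduct, sub_mul, Finset.sum_sub_distrib, ite_mul]

lemma dot_eVec {ι : Type*} [Fintype ι] [DecidableEq ι] (u v : ι) (x : ι → ℝ) :
    x ⬝ᵥ eVec u v = x u - x v := by
  simp [eVec, dotProduct, mul_sub, Finset.sum_sub_distrib, mul_ite]

lemma edgeL_form {ι : Type*} [Fintype ι] [DecidableEq ι] (u v : ι) (x : ι → ℝ) :
    x ⬝ᵥ (edgeL u v *ᵥ x) = (x u - x v) ^ 2 := by
  have h : edgeL u v *ᵥ x = (eVec u v ⬝ᵥ x) • eVec u v := by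
    ext i
    simp [edgeL, Matrix.mulVec, Matrix.vecMulVec_apply, dotProduct, Finset.mul_sum, mul_comm,
      mul_left_comm]
  rw [h, dotProduct_smul, eVec_dot, dot_eVec, smul_eq_mul]
  ring

lemma edgeL_herm {ι : Type*} [Fintype ι] [DecidableEq ι] (u v : ι) :
    (edgeL u v).IsHermitian := by
  ext i j
  simp [edgeL, Matrix.conjTranspose_apply, Matrix.vecMulVec_apply, mul_comm]

lemma herm_smul {ι : Type*} [Fintype ι] (c : ℝ) {M : Matrix ι ι ℝ}
    (h : M.IsHermitian) : (c • M).IsHermitian := by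
  have e : (c • M)ᴴ = c • Mᴴ := by
    ext i j
    simp [Matrix.conjTranspose_apply]
  rw [Matrix.IsHermitian, e, h]

lemma sk (s a P Q : ℝ) (hs0 : 0 < s) (ha0 : 0 < a) (ha1 : a ≤ 1)
    (has : a * s ≤ 1) :
    s * s * a * P ^ 2 + (1/2) * (P - Q) ^ 2 ≤
      (1 + 4 * s) * (s * s * a * Q ^ 2 + (1/2) * (P - Q) ^ 2) := by
  nlinarith [mul_nonneg (mul_nonneg ha0.le hs0.le) (sq_nonneg (s * Q - (P - Q))),
    mul_nonneg (mul_nonneg (mul_nonneg (mul_nonneg ha0.le hs0.le) hs0.le) hs0.le) (sq_nonneg Q),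
    mul_nonneg (mul_nonneg hs0.le (sq_nonneg (P - Q))) (by linarith : (0:ℝ) ≤ 2 - a * s - a)]

lemma sk' (s a P Q : ℝ) (hs0 : 0 < s) (ha0 : 0 < a) (ha1 : a ≤ 1)
    (has : a * s ≤ 1) :
    s * s * a * Q ^ 2 + (1/2) * (P - Q) ^ 2 ≤
      (1 + 4 * s) * (s * s * a * P ^ 2 + (1/2) * (P - Q) ^ 2) := by
  nlinarith [mul_nonneg (mul_nonneg ha0.le hs0.le) (sq_nonneg (s * P + (P - Q))),
    mul_nonneg (mul_nonneg (mul_nonneg (mul_nonneg ha0.le hs0.le) hs0.le) hs0.le) (sq_nonneg P),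
    mul_nonneg (mul_nonneg hs0.le (sq_nonneg (P - Q))) (by linarith : (0:ℝ) ≤ 2 - a * s - a)]

/-- for distinct vertices `x, y, z`, `0 < ε ≤ 1` and `0 < a ≤ 1`,
`ε·a·L_(x,z) + ½·L_(x,y) ≈_{4√ε} ε·a·L_(y,z) + ½·L_(x,y)`. -/
theorem edge_moving_lemma {ι : Type*} [Fintype ι] [DecidableEq ι] (x y z : ι)
    (hxy : x ≠ y) (hxz : x ≠ z) (hyz : y ≠ z)
    (ε a : ℝ) (hε0 : 0 < ε) (hε1 : ε ≤ 1) (ha0 : 0 < a) (ha1 : a ≤ 1) :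
    ApproxEps ((ε * a) • edgeL x z + (1 / 2 : ℝ) • edgeL x y)
      (4 * Real.sqrt ε)
      ((ε * a) • edgeL y z + (1 / 2 : ℝ) • edgeL x y) := by
  set s := Real.sqrt ε with hs
  have hs0 : 0 < s := Real.sqrt_pos.mpr hε0
  have hs1 : s ≤ 1 := by
    rw [hs, show (1:ℝ) = Real.sqrt 1 by simp]
    exact Real.sqrt_le_sqrt hε1
  have hss : s * s = ε := Real.mul_self_sqrt hε0.le
  have hexp : 1 + 4 * s ≤ Real.exp (4 * s) := by
    linarith [Real.add_one_le_exp (4 * s)]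
  have hexpneg : Real.exp (-(4 * s)) * (1 + 4 * s) ≤ 1 := by
    have := Real.add_one_le_exp (4 * s)
    calc Real.exp (-(4 * s)) * (1 + 4 * s) ≤ Real.exp (-(4 * s)) * Real.exp (4 * s) := by
          apply mul_le_mul_of_nonneg_left (by linarith) (Real.exp_pos _).le
      _ = 1 := by rw [← Real.exp_add]; ring_nf; exact Real.exp_zero
  have has : a * s ≤ 1 := mul_le_one₀ ha1 hs0.le hs1
  have key : ∀ v : ι → ℝ, ε * a * (v x - v z) ^ 2 + (1/2) * (v x - v y) ^ 2 ≤
      (1 + 4 * s) * (ε * a * (v y - v z) ^ 2 + (1/2) * (v x - v y) ^ 2) := by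
    intro v
    have h := sk s a (v x - v z) (v y - v z) hs0 ha0 ha1 has
    rw [show v x - v y = (v x - v z) - (v y - v z) by ring, ← hss]
    exact h
  have key' : ∀ v : ι → ℝ, ε * a * (v y - v z) ^ 2 + (1/2) * (v x - v y) ^ 2 ≤
      (1 + 4 * s) * (ε * a * (v x - v z) ^ 2 + (1/2) * (v x - v y) ^ 2) := by
    intro v
    have h := sk' s a (v x - v z) (v y - v z) hs0 ha0 ha1 has
    rw [show v x - v y = (v x - v z) - (v y - v z) by ring, ← hss]
    exact h
  have hermA : ((ε * a) • edgeL x z + (1 / 2 : ℝ) • edgeL x y).IsHermitian :=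
    (herm_smul _ (edgeL_herm x z)).add (herm_smul _ (edgeL_herm x y))
  have hermB : ((ε * a) • edgeL y z + (1 / 2 : ℝ) • edgeL x y).IsHermitian :=
    (herm_smul _ (edgeL_herm y z)).add (herm_smul _ (edgeL_herm x y))
  have formA : ∀ v : ι → ℝ,
      v ⬝ᵥ (((ε * a) • edgeL x z + (1 / 2 : ℝ) • edgeL x y) *ᵥ v) =
        ε * a * (v x - v z) ^ 2 + (1/2) * (v x - v y) ^ 2 := by
    intro v
    rw [Matrix.add_mulVec, dotProduct_add, Matrix.smul_mulVec, Matrix.smul_mulVec,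
      dotProduct_smul, dotProduct_smul, edgeL_form, edgeL_form]
    simp [smul_eq_mul]
  have formB : ∀ v : ι → ℝ,
      v ⬝ᵥ (((ε * a) • edgeL y z + (1 / 2 : ℝ) • edgeL x y) *ᵥ v) =
        ε * a * (v y - v z) ^ 2 + (1/2) * (v x - v y) ^ 2 := by
    intro v
    rw [Matrix.add_mulVec, dotProduct_add, Matrix.smul_mulVec, Matrix.smul_mulVec,
      dotProduct_smul, dotProduct_smul, edgeL_form, edgeL_form]
    simp [smul_eq_mul]
  have hBnn : ∀ v : ι → ℝ, 0 ≤ ε * a * (v y - v z) ^ 2 + (1/2) * (v x - v y) ^ 2 := by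
    intro v
    have := mul_nonneg (mul_pos hε0 ha0).le (sq_nonneg (v y - v z))
    nlinarith [sq_nonneg (v x - v y)]
  constructor
  · refine Matrix.posSemidef_iff_dotProduct_mulVec.mpr ⟨(herm_smul _ hermB).sub hermA, fun v => ?_⟩
    rw [Matrix.sub_mulVec, dotProduct_sub, Matrix.smul_mulVec, dotProduct_smul]
    simp only [star_trivial, smul_eq_mul, formA, formB]
    have h1 := key v
    have h2 : (1 + 4 * s) * (ε * a * (v y - v z) ^ 2 + (1/2) * (v x - v y) ^ 2) ≤
        Real.exp (4 * s) * (ε * a * (v y - v z) ^ 2 + (1/2) * (v x - v y) ^ 2) :=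
      mul_le_mul_of_nonneg_right hexp (hBnn v)
    linarith
  · refine Matrix.posSemidef_iff_dotProduct_mulVec.mpr ⟨hermA.sub (herm_smul _ hermB), fun v => ?_⟩
    rw [Matrix.sub_mulVec, dotProduct_sub, Matrix.smul_mulVec, dotProduct_smul]
    simp only [star_trivial, smul_eq_mul, formA, formB]
    have h1 := key' v
    have h2 : Real.exp (-(4 * s)) * ((1 + 4 * s) * (ε * a * (v x - v z) ^ 2 + (1/2) * (v x - v y) ^ 2)) ≤
        1 * (ε * a * (v x - v z) ^ 2 + (1/2) * (v x - v y) ^ 2) := by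
      rw [← mul_assoc]
      apply mul_le_mul_of_nonneg_right hexpneg
      positivity
    have h3 : Real.exp (-(4 * s)) * (ε * a * (v y - v z) ^ 2 + (1/2) * (v x - v y) ^ 2) ≤
        Real.exp (-(4 * s)) * ((1 + 4 * s) * (ε * a * (v x - v z) ^ 2 + (1/2) * (v x - v y) ^ 2)) :=
      mul_le_mul_of_nonneg_left h1 (Real.exp_pos _).le
    linarith
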